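/- Let M ∈ ℝ^{n×m} and let V₁ ∈ ℝ^{n×R}, V₂ ∈ ℝ^{m×R} have orthonormal columns. Then there exist λ ≥ 0 and W ∈ ℝ^{n×m} with V₁ᵀW = 0, WV₂ = 0 and ‖W‖ ≤ 1 such that ‖λ(V₁V₂ᵀ + W) − M‖_F ≤ 3√R · ‖M‖. -/

import Mathlib

open MeasureTheory ProbabilityTheory Matrix

noncomputable section

def eNorm {ι : Type*} [Fintype ι] (x : ι → ℝ) : ℝ := Real.sqrt (∑ i, x i ^ 2)

def eInner {ι : Type*} [Fintype ι] (x y : ι → ℝ) : ℝ := ∑ i, x i * y i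

def frobNorm {m n : Type*} [Fintype m] [Fintype n] (A : Matrix m n ℝ) : ℝ :=
  Real.sqrt (∑ i, ∑ j, A i j ^ 2)

def frobInner {m n : Type*} [Fintype m] [Fintype n] (A B : Matrix m n ℝ) : ℝ :=
  ∑ i, ∑ j, A i j * B i j

def specNorm {m n : Type*} [Fintype m] [Fintype n] (A : Matrix m n ℝ) : ℝ :=
  sSup {c | ∃ x : n → ℝ, eNorm x ≤ 1 ∧ c = eNorm (A.mulVec x)}

def nucNorm {m n : Type*} [Fintype m] [Fintype n] [DecidableEq n] (A : Matrix m n ℝ) : ℝ :=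
  ∑ i, Real.sqrt (((by simpa only [Matrix.conjTranspose_eq_transpose_of_trivial] using Matrix.isHermitian_conjTranspose_mul_self A :
    (Aᵀ * A).IsHermitian)).eigenvalues i)

def hankel {n : ℕ} (v : Fin (2*n-1) → ℝ) : Matrix (Fin n) (Fin n) ℝ :=
  Matrix.of fun j k => v ⟨(j:ℕ) + k, by omega⟩

def Kw (n : ℕ) (j : Fin (2*n-1)) : ℝ :=
  if (j:ℕ) + 1 ≤ n then Real.sqrt ((j:ℕ) + 1) else Real.sqrt (2*n - ((j:ℕ)+1))

def wHankel {n p : ℕ} (β : Fin (2*n-1) × Fin p → ℝ) : Matrix (Fin n) (Fin n × Fin p) ℝ :=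
  Matrix.of fun j kl => β (⟨(j:ℕ) + kl.1, by omega⟩, kl.2) / Kw n ⟨(j:ℕ) + kl.1, by omega⟩

def blockHankel {n p : ℕ} (h : Fin (2*n-1) × Fin p → ℝ) : Matrix (Fin n) (Fin n × Fin p) ℝ :=
  Matrix.of fun j kl => h (⟨(j:ℕ) + kl.1, by omega⟩, kl.2)

def stdGaussian (ι : Type*) [Fintype ι] : Measure (ι → ℝ) :=
  Measure.pi fun _ => gaussianReal 0 1

def gaussWidth {ι : Type*} [Fintype ι] (S : Set (ι → ℝ)) : ℝ :=
  ∫ g, sSup ((fun γ => eInner γ g) '' S) ∂ stdGaussian ι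

section AuxStmt6

set_option linter.unusedSectionVars false

variable {ι κ ρ : Type*} [Fintype ι] [Fintype κ] [Fintype ρ]

lemma eNorm_nonneg' (x : ι → ℝ) : 0 ≤ eNorm x := Real.sqrt_nonneg _

lemma eNorm_sq (x : ι → ℝ) : eNorm x ^ 2 = ∑ i, x i ^ 2 := Real.sq_sqrt (by positivity)

lemma eNorm_eq_norm (x : ι → ℝ) : eNorm x = ‖(WithLp.equiv 2 (ι → ℝ)).symm x‖ := by
  rw [EuclideanSpace.norm_eq]; simp [eNorm, Real.norm_eq_abs, sq_abs]

lemma eInner_eq_inner (x y : ι → ℝ) :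
    eInner x y = inner ℝ ((WithLp.equiv 2 (ι → ℝ)).symm x) ((WithLp.equiv 2 (ι → ℝ)).symm y) := by
  simp [eInner, inner, mul_comm]

lemma abs_eInner_le (x y : ι → ℝ) : |eInner x y| ≤ eNorm x * eNorm y := by
  rw [eInner_eq_inner, eNorm_eq_norm, eNorm_eq_norm]
  exact abs_real_inner_le_norm _ _

lemma eInner_self (x : ι → ℝ) : eInner x x = eNorm x ^ 2 := by
  rw [eNorm_sq]; simp [eInner, sq]

lemma eNorm_smul (c : ℝ) (x : ι → ℝ) : eNorm (c • x) = |c| * eNorm x := by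
  simp only [eNorm, Pi.smul_apply, smul_eq_mul, mul_pow, ← Finset.mul_sum]
  rw [Real.sqrt_mul (sq_nonneg c), Real.sqrt_sq_eq_abs]

lemma eNorm_zero : eNorm (0 : ι → ℝ) = 0 := by simp [eNorm]

lemma eNorm_eq_zero {x : ι → ℝ} (h : eNorm x = 0) : x = 0 := by
  have h2 : ∑ i, x i ^ 2 = 0 := by
    have := eNorm_sq x; rw [h] at this; linarith [this.symm]
  funext i
  have := (Finset.sum_eq_zero_iff_of_nonneg (fun i _ => sq_nonneg (x i))).mp h2 i (Finset.mem_univ i)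
  exact pow_eq_zero_iff (n := 2) (by norm_num) |>.mp this

lemma eInner_mulVec (A : Matrix ι κ ℝ) (x : κ → ℝ) (y : ι → ℝ) :
    eInner (A.mulVec x) y = eInner x (Aᵀ.mulVec y) := by
  simp only [eInner, mulVec, dotProduct, transpose_apply, Finset.sum_mul, Finset.mul_sum]
  rw [Finset.sum_comm]
  exact Finset.sum_congr rfl fun j _ => Finset.sum_congr rfl fun i _ => by ring

lemma frobNorm_nonneg' (A : Matrix ι κ ℝ) : 0 ≤ frobNorm A := Real.sqrt_nonneg _

lemma frobNorm_sq (A : Matrix ι κ ℝ) : frobNorm A ^ 2 = ∑ i, ∑ j, A i j ^ 2 :=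
  Real.sq_sqrt (by positivity)

lemma my_le_of_sq_le_sq {a b : ℝ} (h : a ^ 2 ≤ b ^ 2) (hb : 0 ≤ b) : a ≤ b :=
  (abs_le_of_sq_le_sq' h hb).2

lemma eNorm_mulVec_le_frob (A : Matrix ι κ ℝ) (x : κ → ℝ) :
    eNorm (A.mulVec x) ≤ frobNorm A * eNorm x := by
  refine my_le_of_sq_le_sq ?_ (mul_nonneg (frobNorm_nonneg' A) (eNorm_nonneg' x))
  rw [eNorm_sq, mul_pow, frobNorm_sq, eNorm_sq, Finset.sum_mul]
  refine Finset.sum_le_sum fun i _ => ?_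
  simpa [mulVec, dotProduct] using
    Finset.sum_mul_sq_le_sq_mul_sq Finset.univ (fun j => A i j) x

lemma specSet_bddAbove (A : Matrix ι κ ℝ) :
    BddAbove {c | ∃ x : κ → ℝ, eNorm x ≤ 1 ∧ c = eNorm (A.mulVec x)} := by
  refine ⟨frobNorm A, fun c hc => ?_⟩
  obtain ⟨x, hx, rfl⟩ := hc
  calc eNorm (A.mulVec x) ≤ frobNorm A * eNorm x := eNorm_mulVec_le_frob A x
    _ ≤ frobNorm A * 1 := mul_le_mul_of_nonneg_left hx (frobNorm_nonneg' A)
    _ = frobNorm A := mul_one _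

lemma specNorm_nonneg (A : Matrix ι κ ℝ) : 0 ≤ specNorm A := by
  refine le_csSup (specSet_bddAbove A) ?_
  exact ⟨0, by simp [eNorm_zero], by simp [eNorm_zero, Matrix.mulVec_zero]⟩

lemma specNorm_le (A : Matrix ι κ ℝ) {c : ℝ} (hc : 0 ≤ c)
    (h : ∀ x : κ → ℝ, eNorm x ≤ 1 → eNorm (A.mulVec x) ≤ c) : specNorm A ≤ c := by
  refine Real.sSup_le (fun b hb => ?_) hc
  obtain ⟨x, hx, rfl⟩ := hb
  exact h x hx

lemma eNorm_mulVec_le (A : Matrix ι κ ℝ) (x : κ → ℝ) :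
    eNorm (A.mulVec x) ≤ specNorm A * eNorm x := by
  rcases eq_or_ne (eNorm x) 0 with h | h
  · have hx0 : x = 0 := eNorm_eq_zero h
    subst hx0
    simp [Matrix.mulVec_zero, eNorm_zero]
  · have hpos : 0 < eNorm x := lt_of_le_of_ne (eNorm_nonneg' x) (Ne.symm h)
    set u := (eNorm x)⁻¹ • x with hu
    have hun : eNorm u = 1 := by
      rw [hu, eNorm_smul, abs_of_nonneg (inv_nonneg.mpr (eNorm_nonneg' x)),
        inv_mul_cancel₀ h]
    have hmem : eNorm (A.mulVec u) ≤ specNorm A :=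
      le_csSup (specSet_bddAbove A) ⟨u, le_of_eq hun, rfl⟩
    have hx : x = eNorm x • u := by
      rw [hu, smul_smul, mul_inv_cancel₀ h, one_smul]
    calc eNorm (A.mulVec x) = eNorm (A.mulVec (eNorm x • u)) := by rw [← hx]
      _ = |eNorm x| * eNorm (A.mulVec u) := by rw [Matrix.mulVec_smul, eNorm_smul]
      _ = eNorm x * eNorm (A.mulVec u) := by rw [abs_of_nonneg (eNorm_nonneg' x)]
      _ ≤ eNorm x * specNorm A := mul_le_mul_of_nonneg_left hmem (le_of_lt hpos)
      _ = specNorm A * eNorm x := mul_comm _ _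

lemma eNorm_mulVec_le_of_inner (A : Matrix ι κ ℝ) (x : κ → ℝ) {c : ℝ} (hc : 0 ≤ c)
    (h : eNorm (A.mulVec x) ^ 2 ≤ c * eNorm (A.mulVec x)) : eNorm (A.mulVec x) ≤ c := by
  rcases eq_or_lt_of_le (eNorm_nonneg' (A.mulVec x)) with h0 | h0
  · rw [← h0]; exact hc
  · nlinarith [h]

lemma specNorm_transpose_le (A : Matrix ι κ ℝ) : specNorm Aᵀ ≤ specNorm A := by
  refine specNorm_le _ (specNorm_nonneg A) fun x hx => ?_
  refine eNorm_mulVec_le_of_inner _ _ (specNorm_nonneg A) ?_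
  have h1 : eNorm (Aᵀ.mulVec x) ^ 2 = eInner x (A.mulVec (Aᵀ.mulVec x)) := by
    rw [← eInner_self, eInner_mulVec, transpose_transpose]
  calc eNorm (Aᵀ.mulVec x) ^ 2 = eInner x (A.mulVec (Aᵀ.mulVec x)) := h1
    _ ≤ |eInner x (A.mulVec (Aᵀ.mulVec x))| := le_abs_self _
    _ ≤ eNorm x * eNorm (A.mulVec (Aᵀ.mulVec x)) := abs_eInner_le _ _
    _ ≤ 1 * (specNorm A * eNorm (Aᵀ.mulVec x)) :=
        mul_le_mul hx (eNorm_mulVec_le A _) (eNorm_nonneg' _) zero_le_one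
    _ = specNorm A * eNorm (Aᵀ.mulVec x) := one_mul _

lemma eNorm_proj_le {P : Matrix ι ι ℝ} (hPt : Pᵀ = P) (hPP : P * P = P) (y : ι → ℝ) :
    eNorm (P.mulVec y) ≤ eNorm y := by
  refine eNorm_mulVec_le_of_inner _ _ (eNorm_nonneg' y) ?_
  have h1 : eNorm (P.mulVec y) ^ 2 = eInner y (P.mulVec y) := by
    rw [← eInner_self, eInner_mulVec, hPt, Matrix.mulVec_mulVec, hPP]
  calc eNorm (P.mulVec y) ^ 2 = eInner y (P.mulVec y) := h1
    _ ≤ |eInner y (P.mulVec y)| := le_abs_self _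
    _ ≤ eNorm y * eNorm (P.mulVec y) := abs_eInner_le _ _

def toE (A : Matrix ι κ ℝ) : EuclideanSpace ℝ (ι × κ) :=
  (WithLp.equiv 2 (ι × κ → ℝ)).symm (fun p => A p.1 p.2)

lemma frobNorm_eq_norm (A : Matrix ι κ ℝ) : frobNorm A = ‖toE A‖ := by
  rw [EuclideanSpace.norm_eq]
  simp [frobNorm, toE, Real.norm_eq_abs, sq_abs, Fintype.sum_prod_type]

lemma toE_sub (A B : Matrix ι κ ℝ) : toE (A - B) = toE A - toE B := rfl

lemma frob_sub_sub_le (A B C : Matrix ι κ ℝ) :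
    frobNorm (A - B - C) ≤ frobNorm A + frobNorm B + frobNorm C := by
  simp only [frobNorm_eq_norm, toE_sub]
  calc ‖toE A - toE B - toE C‖ ≤ ‖toE A - toE B‖ + ‖toE C‖ := norm_sub_le _ _
    _ ≤ ‖toE A‖ + ‖toE B‖ + ‖toE C‖ := by
        have := norm_sub_le (toE A) (toE B); linarith

lemma frobNorm_smul (c : ℝ) (A : Matrix ι κ ℝ) : frobNorm (c • A) = |c| * frobNorm A := by
  have : toE (c • A) = c • toE A := rfl
  rw [frobNorm_eq_norm, this, norm_smul, Real.norm_eq_abs, frobNorm_eq_norm]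

lemma frobNorm_transpose (A : Matrix ι κ ℝ) : frobNorm Aᵀ = frobNorm A := by
  rw [frobNorm, frobNorm, Finset.sum_comm]; rfl

lemma frob_mul_sq (A : Matrix ι κ ℝ) (B : Matrix κ ρ ℝ) :
    frobNorm (A * B) ^ 2 = ∑ j : ρ, eNorm (A.mulVec (fun k => B k j)) ^ 2 := by
  rw [frobNorm_sq, Finset.sum_comm]
  refine Finset.sum_congr rfl fun j _ => ?_
  rw [eNorm_sq]
  refine Finset.sum_congr rfl fun i _ => ?_
  simp [Matrix.mul_apply, Matrix.mulVec, dotProduct]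

lemma frob_eq_of_sq_eq {a b : ℝ} (ha : 0 ≤ a) (hb : 0 ≤ b) (h : a ^ 2 = b ^ 2) : a = b := by
  nlinarith

lemma frob_mul_le_cols {c : ℝ} (hc : 0 ≤ c) (A : Matrix ι κ ℝ) (B : Matrix κ ρ ℝ)
    (h : ∀ j : ρ, eNorm (A.mulVec fun k => B k j) ≤ c) :
    frobNorm (A * B) ≤ Real.sqrt (Fintype.card ρ) * c := by
  have h2 : frobNorm (A * B) ^ 2 ≤ (Fintype.card ρ : ℝ) * c ^ 2 := by
    rw [frob_mul_sq]
    calc ∑ j : ρ, eNorm (A.mulVec fun k => B k j) ^ 2 ≤ ∑ _j : ρ, c ^ 2 :=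
        Finset.sum_le_sum fun j _ => by
          have := h j
          have h0 : (0:ℝ) ≤ eNorm (A.mulVec fun k => B k j) := Real.sqrt_nonneg _
          nlinarith
      _ = (Fintype.card ρ : ℝ) * c ^ 2 := by simp [Finset.sum_const, nsmul_eq_mul]
  refine (abs_le_of_sq_le_sq' ?_ (by positivity)).2
  rw [mul_pow, Real.sq_sqrt (by positivity : (0:ℝ) ≤ (Fintype.card ρ : ℝ))]
  exact h2

lemma eNorm_mulVec_orth {R : ℕ} {V : Matrix ι (Fin R) ℝ} (hV : Vᵀ * V = 1) (y : Fin R → ℝ) :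
    eNorm (V.mulVec y) = eNorm y := by
  refine frob_eq_of_sq_eq (eNorm_nonneg' _) (eNorm_nonneg' _) ?_
  rw [← eInner_self, ← eInner_self, eInner_mulVec, Matrix.mulVec_mulVec, hV, Matrix.one_mulVec]

lemma frob_mul_orth {R : ℕ} {V : Matrix ι (Fin R) ℝ} (hV : Vᵀ * V = 1)
    (Y : Matrix (Fin R) κ ℝ) : frobNorm (V * Y) = frobNorm Y := by
  refine frob_eq_of_sq_eq (frobNorm_nonneg' _) (frobNorm_nonneg' _) ?_
  rw [frob_mul_sq]
  have : frobNorm Y ^ 2 = ∑ j : κ, eNorm (fun k => Y k j) ^ 2 := by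
    rw [frobNorm_sq, Finset.sum_comm]
    exact Finset.sum_congr rfl fun j _ => (eNorm_sq _).symm
  rw [this]
  exact Finset.sum_congr rfl fun j _ => by rw [eNorm_mulVec_orth hV]

lemma frob_mul_orth_right {R : ℕ} {V : Matrix κ (Fin R) ℝ} (hV : Vᵀ * V = 1)
    (X : Matrix ι (Fin R) ℝ) : frobNorm (X * Vᵀ) = frobNorm X := by
  rw [← frobNorm_transpose (X * Vᵀ), Matrix.transpose_mul, Matrix.transpose_transpose,
    frob_mul_orth hV, frobNorm_transpose]

lemma eNorm_col_orth {R : ℕ} {V : Matrix κ (Fin R) ℝ} (hV : Vᵀ * V = 1) (j : Fin R) :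
    eNorm (fun k => V k j) = 1 := by
  refine frob_eq_of_sq_eq (eNorm_nonneg' _) zero_le_one ?_
  rw [eNorm_sq, one_pow]
  have := congrArg (fun A => A j j) hV
  simpa [Matrix.mul_apply, sq] using this

lemma frob_orth_cols {R : ℕ} {V : Matrix κ (Fin R) ℝ} (hV : Vᵀ * V = 1) :
    frobNorm V = Real.sqrt R := by
  refine frob_eq_of_sq_eq (frobNorm_nonneg' _) (Real.sqrt_nonneg _) ?_
  rw [frobNorm_sq, Real.sq_sqrt (by positivity : (0:ℝ) ≤ (R:ℝ)), Finset.sum_comm]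
  have : ∀ j : Fin R, ∑ i : κ, V i j ^ 2 = 1 := by
    intro j
    have := congrArg (fun A => A j j) hV
    simpa [Matrix.mul_apply, sq] using this
  simp [this]

end AuxStmt6

/-- For `M ∈ ℝ^{n×m}` and `V₁, V₂` with orthonormal columns, there exist `λ ≥ 0` and `W`
with `V₁ᵀW = 0`, `WV₂ = 0`, `‖W‖ ≤ 1` such that `‖λ(V₁V₂ᵀ + W) - M‖_F ≤ 3√R·‖M‖`. -/
theorem stmt6 (n m R : ℕ) (M : Matrix (Fin n) (Fin m) ℝ)
    (V₁ : Matrix (Fin n) (Fin R) ℝ) (V₂ : Matrix (Fin m) (Fin R) ℝ)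
    (hV₁ : V₁ᵀ * V₁ = 1) (hV₂ : V₂ᵀ * V₂ = 1) :
    ∃ (l : ℝ) (W : Matrix (Fin n) (Fin m) ℝ),
      0 ≤ l ∧ V₁ᵀ * W = 0 ∧ W * V₂ = 0 ∧ specNorm W ≤ 1 ∧
      frobNorm (l • (V₁ * V₂ᵀ + W) - M) ≤ 3 * Real.sqrt R * specNorm M := by
  set s := specNorm M with hs
  have hs0 : 0 ≤ s := specNorm_nonneg M
  rcases eq_or_lt_of_le hs0 with hsz | hsp
  · -- specNorm M = 0, hence M = 0
    have hM0 : M = 0 := by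
      ext i j
      have hx : eNorm (M.mulVec (Pi.single j 1)) ≤ 0 := by
        have h1 : eNorm (Pi.single j (1:ℝ) : Fin m → ℝ) ≤ 1 := by
          have : eNorm (Pi.single j (1:ℝ) : Fin m → ℝ) = 1 := by
            refine frob_eq_of_sq_eq (eNorm_nonneg' _) zero_le_one ?_
            rw [eNorm_sq, one_pow]
            simp [Pi.single_apply, sq]
          exact le_of_eq this
        calc eNorm (M.mulVec (Pi.single j 1)) ≤ s * eNorm (Pi.single j (1:ℝ)) :=
            eNorm_mulVec_le M _
          _ ≤ s * 1 := mul_le_mul_of_nonneg_left h1 hs0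
          _ = 0 := by rw [← hsz, zero_mul]
      have h0 : M.mulVec (Pi.single j 1) = 0 :=
        eNorm_eq_zero (le_antisymm hx (eNorm_nonneg' _))
      have := congrFun h0 i
      simpa [Matrix.mulVec_single] using this
    refine ⟨0, 0, le_refl 0, by simp, by simp, ?_, ?_⟩
    · refine specNorm_le _ zero_le_one fun x _ => ?_
      simp [Matrix.zero_mulVec, eNorm_zero]
    · subst hM0
      simp only [zero_smul, zero_sub, sub_zero, neg_zero]
      have : frobNorm (0 : Matrix (Fin n) (Fin m) ℝ) = 0 := by simp [frobNorm]
      rw [this]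
      positivity
  · -- s > 0
    have hsne : s ≠ 0 := ne_of_gt hsp
    set P : Matrix (Fin n) (Fin n) ℝ := V₁ * V₁ᵀ with hP
    set Q : Matrix (Fin m) (Fin m) ℝ := V₂ * V₂ᵀ with hQ
    set B : Matrix (Fin n) (Fin m) ℝ := (1 - P) * M * (1 - Q) with hB
    have hVP : V₁ᵀ * (1 - P) = 0 := by
      rw [Matrix.mul_sub, Matrix.mul_one, hP, ← Matrix.mul_assoc, hV₁, Matrix.one_mul, sub_self]
    have hQV : (1 - Q) * V₂ = 0 := by
      rw [Matrix.sub_mul, Matrix.one_mul, hQ, Matrix.mul_assoc, hV₂, Matrix.mul_one, sub_self]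
    have hPp : P * P = P := by
      rw [hP, Matrix.mul_assoc, ← Matrix.mul_assoc V₁ᵀ V₁ V₁ᵀ, hV₁, Matrix.one_mul]
    have hPP : (1 - P) * (1 - P) = 1 - P := by
      rw [Matrix.sub_mul, Matrix.one_mul, Matrix.mul_sub, Matrix.mul_one, hPp, sub_self, sub_zero]
    have hQp : Q * Q = Q := by
      rw [hQ, Matrix.mul_assoc, ← Matrix.mul_assoc V₂ᵀ V₂ V₂ᵀ, hV₂, Matrix.one_mul]
    have hQQ : (1 - Q) * (1 - Q) = 1 - Q := by
      rw [Matrix.sub_mul, Matrix.one_mul, Matrix.mul_sub, Matrix.mul_one, hQp, sub_self, sub_zero]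
    have hPt : (1 - P)ᵀ = 1 - P := by
      rw [Matrix.transpose_sub, Matrix.transpose_one, hP, Matrix.transpose_mul,
        Matrix.transpose_transpose]
    have hQt : (1 - Q)ᵀ = 1 - Q := by
      rw [Matrix.transpose_sub, Matrix.transpose_one, hQ, Matrix.transpose_mul,
        Matrix.transpose_transpose]
    refine ⟨s, s⁻¹ • B, hs0, ?_, ?_, ?_, ?_⟩
    · -- V₁ᵀ W = 0
      rw [Matrix.mul_smul]
      have : V₁ᵀ * B = 0 := by
        rw [hB, ← Matrix.mul_assoc, ← Matrix.mul_assoc, hVP, Matrix.zero_mul, Matrix.zero_mul]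
      rw [this, smul_zero]
    · -- W V₂ = 0
      rw [Matrix.smul_mul]
      have : B * V₂ = 0 := by
        rw [hB, Matrix.mul_assoc ((1 - P) * M) (1 - Q) V₂, hQV, Matrix.mul_zero]
      rw [this, smul_zero]
    · -- spectral norm bound
      refine specNorm_le _ zero_le_one fun x hx => ?_
      have hBx : B.mulVec x = (1 - P).mulVec (M.mulVec ((1 - Q).mulVec x)) := by
        rw [Matrix.mulVec_mulVec, Matrix.mulVec_mulVec, hB]
      have hchain : eNorm (B.mulVec x) ≤ s := by
        rw [hBx]
        calc eNorm ((1 - P).mulVec (M.mulVec ((1 - Q).mulVec x)))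
            ≤ eNorm (M.mulVec ((1 - Q).mulVec x)) := eNorm_proj_le hPt hPP _
          _ ≤ s * eNorm ((1 - Q).mulVec x) := eNorm_mulVec_le M _
          _ ≤ s * eNorm x := mul_le_mul_of_nonneg_left (eNorm_proj_le hQt hQQ x) hs0
          _ ≤ s * 1 := mul_le_mul_of_nonneg_left hx hs0
          _ = s := mul_one s
      have : (s⁻¹ • B).mulVec x = s⁻¹ • (B.mulVec x) := by
        rw [Matrix.smul_mulVec]
      rw [this, eNorm_smul, abs_of_nonneg (inv_nonneg.mpr hs0)]
      calc s⁻¹ * eNorm (B.mulVec x) ≤ s⁻¹ * s :=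
          mul_le_mul_of_nonneg_left hchain (inv_nonneg.mpr hs0)
        _ = 1 := inv_mul_cancel₀ hsne
    · -- Frobenius bound
      have hkey : s • (V₁ * V₂ᵀ + s⁻¹ • B) - M
          = s • (V₁ * V₂ᵀ) - V₁ * (V₁ᵀ * M) - ((M - V₁ * (V₁ᵀ * M)) * V₂) * V₂ᵀ := by
        have hPM : (1 - P) * M = M - V₁ * (V₁ᵀ * M) := by
          rw [Matrix.sub_mul, Matrix.one_mul, hP, Matrix.mul_assoc]
        have hBid : B = M - V₁ * (V₁ᵀ * M) - ((M - V₁ * (V₁ᵀ * M)) * V₂) * V₂ᵀ := by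
          rw [hB, Matrix.mul_sub, Matrix.mul_one, hPM, hQ,
            ← Matrix.mul_assoc (M - V₁ * (V₁ᵀ * M)) V₂ V₂ᵀ]
        rw [smul_add, smul_smul, mul_inv_cancel₀ hsne, one_smul, hBid]
        abel
      rw [hkey]
      have t1 : frobNorm (s • (V₁ * V₂ᵀ)) = s * Real.sqrt R := by
        rw [frobNorm_smul, abs_of_nonneg hs0, frob_mul_orth hV₁, frobNorm_transpose,
          frob_orth_cols hV₂]
      have t2 : frobNorm (V₁ * (V₁ᵀ * M)) ≤ Real.sqrt R * s := by
        rw [frob_mul_orth hV₁, ← frobNorm_transpose, Matrix.transpose_mul,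
          Matrix.transpose_transpose]
        have hcard : (Fintype.card (Fin R) : ℝ) = (R : ℝ) := by simp
        have := frob_mul_le_cols hs0 Mᵀ V₁ (fun j => ?_)
        · rwa [hcard] at this
        · calc eNorm (Mᵀ.mulVec fun k => V₁ k j)
              ≤ specNorm Mᵀ * eNorm (fun k => V₁ k j) := eNorm_mulVec_le Mᵀ _
            _ = specNorm Mᵀ := by rw [eNorm_col_orth hV₁, mul_one]
            _ ≤ s := specNorm_transpose_le M
      have t3 : frobNorm (((M - V₁ * (V₁ᵀ * M)) * V₂) * V₂ᵀ) ≤ Real.sqrt R * s := by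
        rw [frob_mul_orth_right hV₂]
        have hA : M - V₁ * (V₁ᵀ * M) = (1 - P) * M := by
          rw [Matrix.sub_mul, Matrix.one_mul, hP, Matrix.mul_assoc]
        rw [hA]
        have hcard : (Fintype.card (Fin R) : ℝ) = (R : ℝ) := by simp
        have := frob_mul_le_cols hs0 ((1 - P) * M) V₂ (fun j => ?_)
        · rwa [hcard] at this
        · have hv : ((1 - P) * M).mulVec (fun k => V₂ k j)
              = (1 - P).mulVec (M.mulVec (fun k => V₂ k j)) := by
            rw [Matrix.mulVec_mulVec]
          rw [hv]
          calc eNorm ((1 - P).mulVec (M.mulVec fun k => V₂ k j))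
              ≤ eNorm (M.mulVec fun k => V₂ k j) := eNorm_proj_le hPt hPP _
            _ ≤ s * eNorm (fun k => V₂ k j) := eNorm_mulVec_le M _
            _ = s := by rw [eNorm_col_orth hV₂, mul_one]
      calc frobNorm (s • (V₁ * V₂ᵀ) - V₁ * (V₁ᵀ * M) - ((M - V₁ * (V₁ᵀ * M)) * V₂) * V₂ᵀ)
          ≤ frobNorm (s • (V₁ * V₂ᵀ)) + frobNorm (V₁ * (V₁ᵀ * M))
            + frobNorm (((M - V₁ * (V₁ᵀ * M)) * V₂) * V₂ᵀ) := frob_sub_sub_le _ _ _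
        _ ≤ s * Real.sqrt R + Real.sqrt R * s + Real.sqrt R * s := by
            rw [t1]; linarith [t2, t3]
        _ = 3 * Real.sqrt R * s := by ring

end
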